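/- Let F_{N²} = F_N(√D), T the norm-one torus, and ν₁,ν₂,ν₃,ν₄ ∈ F_{N²}* nonzero with norms N₁,N₂,N₃,N₄. Write Im(x+y√D) = y. Consider quadruples (β₁,β₂,β₃,β₄) ∈ T⁴ with μᵢ = νᵢβᵢ satisfying μ₁ - μ₂ + μ₃ - μ₄ = 0 and Im(conj(μ₁)μ₂ + conj(μ₃)μ₄) = 0. If N₁ = N₂ = N₃ = N₄, then the set of solutions is exactly the union of the two families {μ₁ = μ₂, μ₃ = μ₄} and {μ₂ = μ₃, μ₁ = μ₄}, each of cardinality |T|², whose intersection has cardinality |T|. -/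

import Mathlib

open Polynomial Set

lemma torus_ncard (N : ℕ) [Fact N.Prime] :
    {x : GaloisField N 2 | x ^ (N + 1) = 1}.ncard = N + 1 := by
  classical
  haveI : Fintype (GaloisField N 2) := Fintype.ofFinite _
  have hN2 : 2 ≤ N := (Fact.out : N.Prime).two_le
  have hcard : Fintype.card (GaloisField N 2) = N ^ 2 := by
    have := GaloisField.card N 2 (by norm_num)
    rwa [Nat.card_eq_fintype_card] at this
  obtain ⟨g, hg⟩ := IsCyclic.exists_ofOrder_eq_natCard (α := (GaloisField N 2)ˣ)
  have hgo : orderOf g = N ^ 2 - 1 := by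
    rwa [Nat.card_eq_fintype_card, Fintype.card_units, hcard] at hg
  have hfac : N ^ 2 - 1 = (N + 1) * (N - 1) := by
    have h1 : 1 ≤ N ^ 2 := Nat.one_le_pow _ _ (by omega)
    zify [h1, show 1 ≤ N by omega]; ring
  have hord : orderOf (g ^ (N - 1)) = N + 1 := by
    rw [orderOf_pow, hgo, hfac, Nat.gcd_eq_right (dvd_mul_left _ _),
      Nat.mul_div_cancel _ (by omega : 0 < N - 1)]
  have hprim : IsPrimitiveRoot (((g ^ (N - 1) : (GaloisField N 2)ˣ)) : GaloisField N 2) (N + 1) := by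
    have h := IsPrimitiveRoot.orderOf (g ^ (N - 1))
    rw [hord] at h
    exact IsPrimitiveRoot.coe_units_iff.mpr h
  have hset : {x : GaloisField N 2 | x ^ (N + 1) = 1}
      = ↑(nthRootsFinset (N + 1) (1 : GaloisField N 2)) := by
    ext x; simp [Polynomial.mem_nthRootsFinset (Nat.succ_pos N)]
  rw [hset, Set.ncard_coe_finset, hprim.card_nthRootsFinset]

lemma prod_ncard {α β : Type*} (s : Set α) (t : Set β) :
    (s ×ˢ t).ncard = s.ncard * t.ncard := by
  rw [← Nat.card_coe_set_eq, ← Nat.card_coe_set_eq, ← Nat.card_coe_set_eq,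
    Nat.card_congr (Equiv.Set.prod s t), Nat.card_prod]

lemma family1_ncard (N : ℕ) [Fact N.Prime] (a b c d : GaloisField N 2)
    (hb : b ≠ 0) (hd : d ≠ 0) (hab : a ^ (N + 1) = b ^ (N + 1))
    (hcd : c ^ (N + 1) = d ^ (N + 1)) :
    {β : Fin 4 → GaloisField N 2 | (∀ i, β i ^ (N + 1) = 1) ∧
        a * β 0 = b * β 1 ∧ c * β 2 = d * β 3}.ncard = (N + 1) ^ 2 := by
  classical
  set T : Set (GaloisField N 2) := {x | x ^ (N + 1) = 1} with hT
  set f : GaloisField N 2 × GaloisField N 2 → (Fin 4 → GaloisField N 2) :=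
    fun p => ![p.1, a / b * p.1, p.2, c / d * p.2] with hf
  have himg : {β : Fin 4 → GaloisField N 2 | (∀ i, β i ^ (N + 1) = 1) ∧
      a * β 0 = b * β 1 ∧ c * β 2 = d * β 3} = f '' (T ×ˢ T) := by
    ext β
    constructor
    · rintro ⟨ht, h1, h2⟩
      refine ⟨(β 0, β 2), ⟨ht 0, ht 2⟩, ?_⟩
      funext i
      fin_cases i <;> simp [hf]
      · field_simp; linear_combination h1
      · field_simp; linear_combination h2
    · rintro ⟨p, ⟨hp1, hp2⟩, rfl⟩
      have hp1' : p.1 ^ (N + 1) = 1 := hp1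
      have hp2' : p.2 ^ (N + 1) = 1 := hp2
      refine ⟨?_, ?_, ?_⟩
      · intro i
        fin_cases i
        · exact hp1
        · show (a / b * p.1) ^ (N + 1) = 1
          rw [mul_pow, hp1', mul_one, div_pow, hab, div_self (pow_ne_zero _ hb)]
        · exact hp2
        · show (c / d * p.2) ^ (N + 1) = 1
          rw [mul_pow, hp2', mul_one, div_pow, hcd, div_self (pow_ne_zero _ hd)]
      · show a * p.1 = b * (a / b * p.1)
        field_simp
      · show c * p.2 = d * (c / d * p.2)
        field_simp
  have hinj : Set.InjOn f (T ×ˢ T) := by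
    intro p _ q _ h
    have h0 := congrFun h 0
    have h2 := congrFun h 2
    simp [hf] at h0 h2
    exact Prod.ext h0 h2
  rw [himg, Set.ncard_image_of_injOn hinj, prod_ncard, torus_ncard, sq]

lemma family2_ncard (N : ℕ) [Fact N.Prime] (a b c d : GaloisField N 2)
    (hc : c ≠ 0) (hd : d ≠ 0) (hbc : b ^ (N + 1) = c ^ (N + 1))
    (had : a ^ (N + 1) = d ^ (N + 1)) :
    {β : Fin 4 → GaloisField N 2 | (∀ i, β i ^ (N + 1) = 1) ∧
        b * β 1 = c * β 2 ∧ a * β 0 = d * β 3}.ncard = (N + 1) ^ 2 := by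
  classical
  set T : Set (GaloisField N 2) := {x | x ^ (N + 1) = 1} with hT
  set f : GaloisField N 2 × GaloisField N 2 → (Fin 4 → GaloisField N 2) :=
    fun p => ![p.1, p.2, b / c * p.2, a / d * p.1] with hf
  have himg : {β : Fin 4 → GaloisField N 2 | (∀ i, β i ^ (N + 1) = 1) ∧
      b * β 1 = c * β 2 ∧ a * β 0 = d * β 3} = f '' (T ×ˢ T) := by
    ext β
    constructor
    · rintro ⟨ht, h1, h2⟩
      refine ⟨(β 0, β 1), ⟨ht 0, ht 1⟩, ?_⟩
      funext i
      fin_cases i <;> simp [hf]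
      · field_simp; linear_combination h1
      · field_simp; linear_combination h2
    · rintro ⟨p, ⟨hp1, hp2⟩, rfl⟩
      have hp1' : p.1 ^ (N + 1) = 1 := hp1
      have hp2' : p.2 ^ (N + 1) = 1 := hp2
      refine ⟨?_, ?_, ?_⟩
      · intro i
        fin_cases i
        · exact hp1
        · exact hp2
        · show (b / c * p.2) ^ (N + 1) = 1
          rw [mul_pow, hp2', mul_one, div_pow, hbc, div_self (pow_ne_zero _ hc)]
        · show (a / d * p.1) ^ (N + 1) = 1
          rw [mul_pow, hp1', mul_one, div_pow, had, div_self (pow_ne_zero _ hd)]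
      · show b * p.2 = c * (b / c * p.2)
        field_simp
      · show a * p.1 = d * (a / d * p.1)
        field_simp
  have hinj : Set.InjOn f (T ×ˢ T) := by
    intro p _ q _ h
    have h0 := congrFun h 0
    have h1 := congrFun h 1
    simp [hf] at h0 h1
    exact Prod.ext h0 h1
  rw [himg, Set.ncard_image_of_injOn hinj, prod_ncard, torus_ncard, sq]

lemma inter_ncard (N : ℕ) [Fact N.Prime] (a b c d : GaloisField N 2)
    (hb : b ≠ 0) (hc : c ≠ 0) (hd : d ≠ 0)
    (hab : a ^ (N + 1) = b ^ (N + 1)) (hac : a ^ (N + 1) = c ^ (N + 1))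
    (had : a ^ (N + 1) = d ^ (N + 1)) :
    ({β : Fin 4 → GaloisField N 2 | (∀ i, β i ^ (N + 1) = 1) ∧
        a * β 0 = b * β 1 ∧ c * β 2 = d * β 3}
      ∩ {β : Fin 4 → GaloisField N 2 | (∀ i, β i ^ (N + 1) = 1) ∧
        b * β 1 = c * β 2 ∧ a * β 0 = d * β 3}).ncard = N + 1 := by
  classical
  set T : Set (GaloisField N 2) := {x | x ^ (N + 1) = 1} with hT
  set f : GaloisField N 2 → (Fin 4 → GaloisField N 2) :=
    fun x => ![x, a / b * x, a / c * x, a / d * x] with hf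
  have himg : ({β : Fin 4 → GaloisField N 2 | (∀ i, β i ^ (N + 1) = 1) ∧
        a * β 0 = b * β 1 ∧ c * β 2 = d * β 3}
      ∩ {β : Fin 4 → GaloisField N 2 | (∀ i, β i ^ (N + 1) = 1) ∧
        b * β 1 = c * β 2 ∧ a * β 0 = d * β 3}) = f '' T := by
    ext β
    constructor
    · rintro ⟨⟨ht, h1, h2⟩, _, h3, h4⟩
      refine ⟨β 0, ht 0, ?_⟩
      funext i
      fin_cases i <;> simp [hf]
      · field_simp; linear_combination h1
      · field_simp; linear_combination h1 + h3
      · field_simp; linear_combination h4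
    · rintro ⟨x, hx, rfl⟩
      have hx' : x ^ (N + 1) = 1 := hx
      have htor : ∀ i, (f x) i ^ (N + 1) = 1 := by
        intro i
        fin_cases i
        · exact hx
        · show (a / b * x) ^ (N + 1) = 1
          rw [mul_pow, hx', mul_one, div_pow, hab, div_self (pow_ne_zero _ hb)]
        · show (a / c * x) ^ (N + 1) = 1
          rw [mul_pow, hx', mul_one, div_pow, hac, div_self (pow_ne_zero _ hc)]
        · show (a / d * x) ^ (N + 1) = 1
          rw [mul_pow, hx', mul_one, div_pow, had, div_self (pow_ne_zero _ hd)]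
      refine ⟨⟨htor, ?_, ?_⟩, htor, ?_, ?_⟩
      · show a * x = b * (a / b * x)
        field_simp
      · show c * (a / c * x) = d * (a / d * x)
        field_simp
      · show b * (a / b * x) = c * (a / c * x)
        field_simp
      · show a * x = d * (a / d * x)
        field_simp
  have hinj : Set.InjOn f T := by
    intro p _ q _ h
    exact congrFun h 0
  rw [himg, Set.ncard_image_of_injOn hinj, torus_ncard]

lemma frob_expand (N : ℕ) [Fact N.Prime] (hq : ∀ x : GaloisField N 2, x ^ (N * N) = x)
    (x y z w : GaloisField N 2) :
    (x ^ N * y + z ^ N * w) ^ N = x * y ^ N + z * w ^ N := by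
  rw [add_pow_char, mul_pow (x ^ N), mul_pow (z ^ N), ← pow_mul, ← pow_mul, hq, hq]

/-- In `F_{N²}` with norm-one torus `T` of order `N+1`, conjugation
given by the Frobenius `x ↦ x^N`, and nonzero `ν₀,ν₁,ν₂,ν₃` of equal norm, the
quadruples `(β₀,β₁,β₂,β₃) ∈ T⁴`, with `μᵢ = νᵢβᵢ`, satisfying `μ₀-μ₁+μ₂-μ₃ = 0`
and `Im(conj(μ₀)μ₁ + conj(μ₂)μ₃) = 0` (i.e. that element is Frobenius-fixed) form
exactly the union of the two families `{μ₀ = μ₁, μ₂ = μ₃}` and `{μ₁ = μ₂, μ₀ = μ₃}`,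
each of cardinality `|T|² = (N+1)²`, whose intersection has cardinality `|T| = N+1`. -/
theorem quadruple_solutions_all_norms_equal
    (N : ℕ) [Fact N.Prime] (hodd : Odd N)
    (ν : Fin 4 → GaloisField N 2) (hν : ∀ i, ν i ≠ 0)
    (hnorm : ∀ i j, ν i * (ν i) ^ N = ν j * (ν j) ^ N) :
    {β : Fin 4 → GaloisField N 2 | (∀ i, β i ^ (N + 1) = 1) ∧
        ν 0 * β 0 - ν 1 * β 1 + ν 2 * β 2 - ν 3 * β 3 = 0 ∧
        ((ν 0 * β 0) ^ N * (ν 1 * β 1) + (ν 2 * β 2) ^ N * (ν 3 * β 3)) ^ N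
          = (ν 0 * β 0) ^ N * (ν 1 * β 1) + (ν 2 * β 2) ^ N * (ν 3 * β 3)}
      = {β : Fin 4 → GaloisField N 2 | (∀ i, β i ^ (N + 1) = 1) ∧
            ν 0 * β 0 = ν 1 * β 1 ∧ ν 2 * β 2 = ν 3 * β 3}
        ∪ {β : Fin 4 → GaloisField N 2 | (∀ i, β i ^ (N + 1) = 1) ∧
            ν 1 * β 1 = ν 2 * β 2 ∧ ν 0 * β 0 = ν 3 * β 3} ∧
    {β : Fin 4 → GaloisField N 2 | (∀ i, β i ^ (N + 1) = 1) ∧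
        ν 0 * β 0 = ν 1 * β 1 ∧ ν 2 * β 2 = ν 3 * β 3}.ncard = (N + 1) ^ 2 ∧
    {β : Fin 4 → GaloisField N 2 | (∀ i, β i ^ (N + 1) = 1) ∧
        ν 1 * β 1 = ν 2 * β 2 ∧ ν 0 * β 0 = ν 3 * β 3}.ncard = (N + 1) ^ 2 ∧
    ({β : Fin 4 → GaloisField N 2 | (∀ i, β i ^ (N + 1) = 1) ∧
        ν 0 * β 0 = ν 1 * β 1 ∧ ν 2 * β 2 = ν 3 * β 3}
      ∩ {β : Fin 4 → GaloisField N 2 | (∀ i, β i ^ (N + 1) = 1) ∧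
        ν 1 * β 1 = ν 2 * β 2 ∧ ν 0 * β 0 = ν 3 * β 3}).ncard = N + 1 := by
  classical
  haveI : Fintype (GaloisField N 2) := Fintype.ofFinite _
  have hprime : N.Prime := Fact.out
  have hcard : Fintype.card (GaloisField N 2) = N * N := by
    have := GaloisField.card N 2 (by norm_num)
    rw [Nat.card_eq_fintype_card] at this
    rw [this]; ring
  have hq : ∀ x : GaloisField N 2, x ^ (N * N) = x := by
    intro x
    have := FiniteField.pow_card x
    rwa [hcard] at this
  have hpow : ∀ i j, (ν i) ^ (N + 1) = (ν j) ^ (N + 1) := by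
    intro i j
    rw [pow_succ', pow_succ', hnorm i j]
  refine ⟨?_, family1_ncard N _ _ _ _ (hν 1) (hν 3) (hpow 0 1) (hpow 2 3),
    family2_ncard N _ _ _ _ (hν 2) (hν 3) (hpow 1 2) (hpow 0 3),
    inter_ncard N _ _ _ _ (hν 1) (hν 2) (hν 3) (hpow 0 1) (hpow 0 2) (hpow 0 3)⟩
  ext β
  simp only [Set.mem_setOf_eq, Set.mem_union]
  constructor
  · rintro ⟨hT, hlin, hfix⟩
    have hn : ∀ i : Fin 4, (ν i * β i) * (ν i * β i) ^ N = ν 0 * ν 0 ^ N := by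
      intro i
      calc (ν i * β i) * (ν i * β i) ^ N = (ν i * ν i ^ N) * (β i) ^ (N + 1) := by
            rw [mul_pow]; ring
        _ = ν i * ν i ^ N := by rw [hT i, mul_one]
        _ = ν 0 * ν 0 ^ N := hnorm i 0
    have hLp : (ν 0 * β 0) ^ N - (ν 1 * β 1) ^ N + (ν 2 * β 2) ^ N - (ν 3 * β 3) ^ N = 0 := by
      have h := congrArg (frobenius (GaloisField N 2) N) hlin
      simpa only [map_sub, map_add, map_zero, frobenius_def] using h
    have hB : (ν 0 * β 0) * (ν 1 * β 1) ^ N + (ν 2 * β 2) * (ν 3 * β 3) ^ N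
        = (ν 0 * β 0) ^ N * (ν 1 * β 1) + (ν 2 * β 2) ^ N * (ν 3 * β 3) := by
      have e : ((ν 0 * β 0) ^ N * (ν 1 * β 1) + (ν 2 * β 2) ^ N * (ν 3 * β 3)) ^ N
          = (ν 0 * β 0) * (ν 1 * β 1) ^ N + (ν 2 * β 2) * (ν 3 * β 3) ^ N :=
        frob_expand N hq _ _ _ _
      rw [e] at hfix
      exact hfix
    have key : 2 * ((ν 0 * β 0) - (ν 1 * β 1)) * ((ν 0 * β 0) ^ N - (ν 3 * β 3) ^ N) = 0 := by
      linear_combination hn 0 - hn 1 + hn 2 - hn 3 + hB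
        + ((ν 0 * β 0) - (ν 1 * β 1)) * hLp
        - ((ν 2 * β 2) ^ N + (ν 3 * β 3) ^ N) * hlin
    have h2ne : (2 : GaloisField N 2) ≠ 0 := by
      intro h
      rw [show (2 : GaloisField N 2) = ((2 : ℕ) : GaloisField N 2) by norm_cast] at h
      have hdvd := (CharP.cast_eq_zero_iff (GaloisField N 2) N 2).mp h
      have := Nat.le_of_dvd (by norm_num) hdvd
      have := hprime.two_le
      have := Nat.odd_iff.mp hodd
      omega
    rcases mul_eq_zero.mp key with h | h
    · rcases mul_eq_zero.mp h with h | h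
      · exact absurd h h2ne
      · have h01 : ν 0 * β 0 = ν 1 * β 1 := sub_eq_zero.mp h
        have h23 : ν 2 * β 2 = ν 3 * β 3 := by linear_combination hlin - h01
        exact Or.inl ⟨hT, h01, h23⟩
    · have h03 : ν 0 * β 0 = ν 3 * β 3 := by
        have h' := congrArg (· ^ N) (sub_eq_zero.mp h)
        simpa only [← pow_mul, hq] using h'
      have h12 : ν 1 * β 1 = ν 2 * β 2 := by linear_combination h03 - hlin
      exact Or.inr ⟨hT, h12, h03⟩
  · rintro (⟨hT, h01, h23⟩ | ⟨hT, h12, h03⟩)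
    · refine ⟨hT, by linear_combination h01 + h23, ?_⟩
      rw [← h01, ← h23, frob_expand N hq]
      ring
    · refine ⟨hT, by linear_combination h03 - h12, ?_⟩
      rw [← h12, ← h03, frob_expand N hq]
      ring
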